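/- Fix an integer N ≥ 2, a real R > 0, a real d with 0 < d ≤ √2·R, and a point C ∈ S whose last coordinate is c with 0 ≤ c ≤ R. Then the spherical cap {x ∈ S : ‖x − C‖ ≤ d} is entirely contained in the hemisphere {x ∈ S : x_N ≥ 0} if and only if d·√(1 − d²/(4R²)) ≤ c. -/

import Mathlib

open RealInnerProductSpace

set_option maxHeartbeats 1000000 in
lemma aux12 {E : Type*} [NormedAddCommGroup E] [InnerProductSpace ℝ E]
    (R d c : ℝ) (hR : 0 < R) (hd0 : 0 < d) (hd2 : d ^ 2 ≤ 2 * R ^ 2)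
    (C e : E) (hC : ‖C‖ = R) (he : ‖e‖ = 1)
    (hce : ⟪C, e⟫ = c) (hc0 : 0 ≤ c) (hcR : c ≤ R) :
    (∀ x : E, ‖x‖ = R → ‖x - C‖ ≤ d → 0 ≤ ⟪x, e⟫) ↔
      d * Real.sqrt (1 - d ^ 2 / (4 * R ^ 2)) ≤ c := by
  have hR2 : (0:ℝ) < R ^ 2 := by positivity
  have hRne : R ≠ 0 := ne_of_gt hR
  have hq0 : (0:ℝ) ≤ 1 - d ^ 2 / (4 * R ^ 2) := by
    rw [sub_nonneg, div_le_one (by positivity)]; linarith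
  have hsq : Real.sqrt (1 - d ^ 2 / (4 * R ^ 2)) ^ 2 = 1 - d ^ 2 / (4 * R ^ 2) :=
    Real.sq_sqrt hq0
  have hCC : ⟪C, C⟫ = R ^ 2 := by rw [real_inner_self_eq_norm_sq, hC]
  have hee : ⟪e, e⟫ = 1 := by rw [real_inner_self_eq_norm_sq, he]; norm_num
  have heC : ⟪e, C⟫ = c := by rw [real_inner_comm]; exact hce
  constructor
  · intro h
    by_contra h'
    push_neg at h'
    have hc2 : 4 * R ^ 2 * c ^ 2 < 4 * R ^ 2 * d ^ 2 - d ^ 4 := by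
      have h2 : c ^ 2 < (d * Real.sqrt (1 - d ^ 2 / (4 * R ^ 2))) ^ 2 :=
        pow_lt_pow_left₀ h' hc0 (by norm_num)
      rw [mul_pow, hsq] at h2
      have h3 : d ^ 2 * (1 - d ^ 2 / (4 * R ^ 2)) = (4 * R ^ 2 * d ^ 2 - d ^ 4) / (4 * R ^ 2) := by
        field_simp
      rw [h3, lt_div_iff₀ (by positivity)] at h2
      linarith [h2]
    have hcR' : c ^ 2 < R ^ 2 := by
      have h4 : 4 * R ^ 2 * c ^ 2 < 4 * R ^ 2 * R ^ 2 := by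
        have := sq_nonneg (d ^ 2 - 2 * R ^ 2)
        have hexp : (d ^ 2 - 2 * R ^ 2) ^ 2 = d ^ 4 - 4 * R ^ 2 * d ^ 2 + 4 * R ^ 2 * R ^ 2 := by
          ring
        linarith [hc2]
      exact lt_of_mul_lt_mul_left h4 (by positivity)
    obtain ⟨A, hA⟩ : ∃ A : ℝ, A = R ^ 2 - d ^ 2 / 2 := ⟨_, rfl⟩
    have hA0 : 0 ≤ A := by rw [hA]; linarith
    have hAle : A ≤ R ^ 2 := by rw [hA]; nlinarith [sq_nonneg d]
    have hA2 : A ^ 2 ≤ R ^ 4 := by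
      calc A ^ 2 ≤ (R ^ 2) ^ 2 := pow_le_pow_left₀ hA0 hAle 2
        _ = R ^ 4 := by ring
    have hp0 : (0:ℝ) < 1 - c ^ 2 / R ^ 2 := by
      rw [sub_pos, div_lt_one hR2]; exact hcR'
    obtain ⟨p, hpdef⟩ : ∃ p : ℝ, p = Real.sqrt (1 - c ^ 2 / R ^ 2) := ⟨_, rfl⟩
    have hpp : p ^ 2 = 1 - c ^ 2 / R ^ 2 := by rw [hpdef]; exact Real.sq_sqrt hp0.le
    have hppos : 0 < p := by rw [hpdef]; exact Real.sqrt_pos.mpr hp0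
    have hpne : p ≠ 0 := ne_of_gt hppos
    obtain ⟨β, hbdef⟩ : ∃ b : ℝ, b = Real.sqrt (R ^ 2 - A ^ 2 / R ^ 2) := ⟨_, rfl⟩
    have hbb : β ^ 2 = R ^ 2 - A ^ 2 / R ^ 2 := by
      rw [hbdef]; apply Real.sq_sqrt
      rw [sub_nonneg, div_le_iff₀ hR2]
      have : R ^ 2 * R ^ 2 = R ^ 4 := by ring
      linarith [hA2]
    have hb0 : 0 ≤ β := by rw [hbdef]; exact Real.sqrt_nonneg _
    obtain ⟨Q, hQdef⟩ : ∃ Q : E, Q = (1 / p) • (e - (c / R ^ 2) • C) := ⟨_, rfl⟩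
    have hCQ : ⟪C, Q⟫ = 0 := by
      simp only [hQdef, inner_sub_right, real_inner_smul_right, hCC, hce]
      field_simp; ring
    have hQC : ⟪Q, C⟫ = 0 := by rw [real_inner_comm]; exact hCQ
    have hQe : ⟪Q, e⟫ = p := by
      simp only [hQdef, inner_sub_left, real_inner_smul_left, hee, heC, hce]
      have h1 : (1:ℝ) - c / R ^ 2 * c = p ^ 2 := by rw [hpp]; ring
      rw [h1]
      field_simp
    have hQQ : ⟪Q, Q⟫ = 1 := by
      simp only [hQdef, inner_sub_left, inner_sub_right, real_inner_smul_left,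
        real_inner_smul_right, hee, heC, hce, hCC]
      have h0 : c - c / R ^ 2 * R ^ 2 = 0 := by field_simp; ring
      have h1 : (1:ℝ) - c / R ^ 2 * c = p ^ 2 := by rw [hpp]; ring
      rw [h0, h1]
      field_simp
      ring
    obtain ⟨x, hxdef⟩ : ∃ x : E, x = (A / R ^ 2) • C - β • Q := ⟨_, rfl⟩
    have hxC : ⟪x, C⟫ = A := by
      simp only [hxdef, inner_sub_left, real_inner_smul_left, hCC, hQC]
      field_simp; ring
    have hxx : ⟪x, x⟫ = R ^ 2 := by
      simp only [hxdef, inner_sub_left, inner_sub_right, real_inner_smul_left,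
        real_inner_smul_right, hCC, hQC, hCQ, hQQ]
      have h5 : A / R ^ 2 * (A / R ^ 2 * R ^ 2) = A ^ 2 / R ^ 2 := by field_simp
      rw [h5]
      have h6 : A ^ 2 / R ^ 2 = R ^ 2 - β ^ 2 := by rw [hbb]; ring
      rw [h6]; ring
    have hxnorm : ‖x‖ = R := by
      have h1 : ‖x‖ ^ 2 = R ^ 2 := by rw [← real_inner_self_eq_norm_sq, hxx]
      rw [← Real.sqrt_sq (norm_nonneg x), h1, Real.sqrt_sq hR.le]
    have hxd : ‖x - C‖ ≤ d := by
      have h1 : ‖x - C‖ ^ 2 = d ^ 2 := by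
        rw [norm_sub_sq_real, hxnorm, hC, hxC, hA]; ring
      have h2 : ‖x - C‖ = d := by
        rw [← Real.sqrt_sq (norm_nonneg (x - C)), h1, Real.sqrt_sq hd0.le]
      exact le_of_eq h2
    have hxe : ⟪x, e⟫ = A * c / R ^ 2 - β * p := by
      simp only [hxdef, inner_sub_left, real_inner_smul_left, hce, hQe]
      ring
    have hneg : ⟪x, e⟫ < 0 := by
      rw [hxe, sub_neg]
      have key : (A * c / R ^ 2) ^ 2 < (β * p) ^ 2 := by
        have h1 : (β * p) ^ 2 = (R ^ 4 - A ^ 2) * (R ^ 2 - c ^ 2) / R ^ 4 := by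
          rw [mul_pow, hbb, hpp]; field_simp
        have h2 : (A * c / R ^ 2) ^ 2 = A ^ 2 * c ^ 2 / R ^ 4 := by
          field_simp
        rw [h1, h2, div_lt_div_iff_of_pos_right (by positivity : (0:ℝ) < R ^ 4)]
        subst hA
        have hprod : 0 < R ^ 2 * (4 * R ^ 2 * d ^ 2 - d ^ 4 - 4 * R ^ 2 * c ^ 2) :=
          mul_pos hR2 (by linarith [hc2])
        linarith [hprod]
      have hAc : 0 ≤ A * c / R ^ 2 := by positivity
      have hbp : 0 ≤ β * p := mul_nonneg hb0 hppos.le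
      exact (pow_lt_pow_iff_left₀ hAc hbp (by norm_num)).mp key
    exact absurd (h x hxnorm hxd) (not_le.mpr hneg)
  · intro h x hx hxd
    obtain ⟨t, htdef⟩ : ∃ t : ℝ, t = ⟪x, C⟫ := ⟨_, rfl⟩
    have hxC2 : ‖x - C‖ ^ 2 ≤ d ^ 2 := pow_le_pow_left₀ (norm_nonneg _) hxd 2
    have ht1 : R ^ 2 - d ^ 2 / 2 ≤ t := by
      rw [norm_sub_sq_real, hx, hC, ← htdef] at hxC2; linarith
    have ht0 : 0 ≤ t := by linarith
    have hc2 : 4 * R ^ 2 * d ^ 2 - d ^ 4 ≤ 4 * R ^ 2 * c ^ 2 := by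
      have h2 : (d * Real.sqrt (1 - d ^ 2 / (4 * R ^ 2))) ^ 2 ≤ c ^ 2 :=
        pow_le_pow_left₀ (by positivity) h 2
      rw [mul_pow, hsq] at h2
      have h3 : d ^ 2 * (1 - d ^ 2 / (4 * R ^ 2)) = (4 * R ^ 2 * d ^ 2 - d ^ 4) / (4 * R ^ 2) := by
        field_simp
      rw [h3, div_le_iff₀ (by positivity)] at h2
      linarith [h2]
    have hxCt : ⟪x, C⟫ = t := htdef.symm
    have hCx : ⟪C, x⟫ = t := by rw [real_inner_comm]; exact hxCt
    obtain ⟨w, hwdef⟩ : ∃ w : E, w = x - (t / R ^ 2) • C := ⟨_, rfl⟩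
    obtain ⟨P, hPdef⟩ : ∃ P : E, P = e - (c / R ^ 2) • C := ⟨_, rfl⟩
    have hxx : ⟪x, x⟫ = R ^ 2 := by rw [real_inner_self_eq_norm_sq, hx]
    have hww : ⟪w, w⟫ = R ^ 2 - t ^ 2 / R ^ 2 := by
      simp only [hwdef, inner_sub_left, inner_sub_right, real_inner_smul_left,
        real_inner_smul_right, hxx, hxCt, hCx, hCC]
      field_simp; ring
    have hPP : ⟪P, P⟫ = 1 - c ^ 2 / R ^ 2 := by
      simp only [hPdef, inner_sub_left, inner_sub_right, real_inner_smul_left,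
        real_inner_smul_right, hee, heC, hce, hCC]
      field_simp; ring
    have hwP : ⟪w, P⟫ = ⟪x, e⟫ - t * c / R ^ 2 := by
      simp only [hwdef, hPdef, inner_sub_left, inner_sub_right, real_inner_smul_left,
        real_inner_smul_right, hce, heC, hCC, hxCt, hCx]
      field_simp
      try ring
    have hwn : ‖w‖ ^ 2 = R ^ 2 - t ^ 2 / R ^ 2 := by
      rw [← real_inner_self_eq_norm_sq, hww]
    have hPn : ‖P‖ ^ 2 = 1 - c ^ 2 / R ^ 2 := by
      rw [← real_inner_self_eq_norm_sq, hPP]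
    have hCS : -(‖w‖ * ‖P‖) ≤ ⟪w, P⟫ := neg_le_of_abs_le (abs_real_inner_le_norm w P)
    have hbound : ‖w‖ * ‖P‖ ≤ t * c / R ^ 2 := by
      have htc : 0 ≤ t * c / R ^ 2 := by positivity
      have hsqle : (‖w‖ * ‖P‖) ^ 2 ≤ (t * c / R ^ 2) ^ 2 := by
        have h1 : (‖w‖ * ‖P‖) ^ 2 = (R ^ 4 - t ^ 2) * (R ^ 2 - c ^ 2) / R ^ 4 := by
          rw [mul_pow, hwn, hPn]; field_simp
        have h2 : (t * c / R ^ 2) ^ 2 = t ^ 2 * c ^ 2 / R ^ 4 := by field_simp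
        rw [h1, h2, div_le_div_iff_of_pos_right (by positivity : (0:ℝ) < R ^ 4)]
        have ht2' : (R ^ 2 - d ^ 2 / 2) ^ 2 ≤ t ^ 2 := pow_le_pow_left₀ (by linarith) ht1 2
        have hkey : 0 ≤ t ^ 2 + R ^ 2 * c ^ 2 - R ^ 4 := by linarith [ht2', hc2]
        have hprod : 0 ≤ R ^ 2 * (t ^ 2 + R ^ 2 * c ^ 2 - R ^ 4) := mul_nonneg hR2.le hkey
        linarith [hprod]
      exact (pow_le_pow_iff_left₀ (mul_nonneg (norm_nonneg w) (norm_nonneg P)) htc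
        (by norm_num)).mp hsqle
    linarith [hwP, hCS, hbound]

set_option maxHeartbeats 1000000 in
theorem stmt_12 (N : ℕ) (hN : 2 ≤ N) (R : ℝ) (hR : 0 < R)
    (d : ℝ) (hd0 : 0 < d) (hd : d ≤ Real.sqrt 2 * R)
    (C : EuclideanSpace ℝ (Fin N)) (hC : ‖C‖ = R)
    (c : ℝ) (hc : C ⟨N - 1, by omega⟩ = c) (hc0 : 0 ≤ c) (hcR : c ≤ R) :
    ({x : EuclideanSpace ℝ (Fin N) | ‖x‖ = R ∧ ‖x - C‖ ≤ d}
        ⊆ {x : EuclideanSpace ℝ (Fin N) | 0 ≤ x ⟨N - 1, by omega⟩})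
      ↔ d * Real.sqrt (1 - d ^ 2 / (4 * R ^ 2)) ≤ c := by
  have hd2 : d ^ 2 ≤ 2 * R ^ 2 := by
    have h2 : (Real.sqrt 2 * R) ^ 2 = 2 * R ^ 2 := by
      rw [mul_pow, Real.sq_sqrt (by norm_num : (0:ℝ) ≤ 2)]
    calc d ^ 2 ≤ (Real.sqrt 2 * R) ^ 2 := pow_le_pow_left₀ hd0.le hd 2
      _ = 2 * R ^ 2 := h2
  set i : Fin N := ⟨N - 1, by omega⟩ with hidef
  obtain ⟨e, hedef⟩ : ∃ e : EuclideanSpace ℝ (Fin N), e = EuclideanSpace.single i (1 : ℝ) :=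
    ⟨_, rfl⟩
  have hinner : ∀ x : EuclideanSpace ℝ (Fin N), ⟪x, e⟫ = x i := by
    intro x
    rw [hedef, EuclideanSpace.inner_single_right]
    simp
  have hnorm : ‖e‖ = 1 := by rw [hedef, EuclideanSpace.norm_single]; norm_num
  have key := aux12 R d c hR hd0 hd2 C e hC hnorm (by rw [hinner]; exact hc) hc0 hcR
  rw [← key]
  constructor
  · intro hsub x hx hxd
    rw [hinner x]
    exact hsub ⟨hx, hxd⟩
  · intro hall x hx
    show 0 ≤ x i
    rw [← hinner x]
    exact hall x hx.1 hx.2
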